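/- Let θ : U → ℂ be a complex harmonic function on an open set U ⊆ ℝ² with cosh θ ≠ 0 and (θ_u)² + (θ_v)² ≠ 0. Then α = −((θ_u)² + (θ_v)²)/cosh²θ satisfies Δ(log α) = 2α for any smooth local branch of log α. -/

import Mathlib

open Complex

noncomputable def pdu {E : Type*} [NormedAddCommGroup E] [NormedSpace ℝ E]
    (f : ℝ × ℝ → E) (p : ℝ × ℝ) : E := fderiv ℝ f p (1, 0)

noncomputable def pdv {E : Type*} [NormedAddCommGroup E] [NormedSpace ℝ E]
    (f : ℝ × ℝ → E) (p : ℝ × ℝ) : E := fderiv ℝ f p (0, 1)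

noncomputable def lap {E : Type*} [NormedAddCommGroup E] [NormedSpace ℝ E]
    (f : ℝ × ℝ → E) (p : ℝ × ℝ) : E := pdu (pdu f) p + pdv (pdv f) p



open Complex Filter

noncomputable section PD

/-- directional partial derivative -/
noncomputable def pd (w : ℝ × ℝ) (f : ℝ × ℝ → ℂ) (x : ℝ × ℝ) : ℂ := fderiv ℝ f x w

variable {f g : ℝ × ℝ → ℂ} {x : ℝ × ℝ} {w v : ℝ × ℝ}

lemma pd_congr (h : f =ᶠ[nhds x] g) (w : ℝ × ℝ) : pd w f x = pd w g x := by
  unfold pd; rw [h.fderiv_eq]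

lemma pd_add (hf : DifferentiableAt ℝ f x) (hg : DifferentiableAt ℝ g x) (w : ℝ × ℝ) :
    pd w (fun y => f y + g y) x = pd w f x + pd w g x := by
  simp [pd, fderiv_fun_add hf hg]

lemma pd_sub (hf : DifferentiableAt ℝ f x) (hg : DifferentiableAt ℝ g x) (w : ℝ × ℝ) :
    pd w (fun y => f y - g y) x = pd w f x - pd w g x := by
  simp [pd, fderiv_fun_sub hf hg]

lemma pd_neg (w : ℝ × ℝ) : pd w (fun y => -f y) x = -pd w f x := by
  simp [pd, fderiv_neg]

lemma pd_mul (hf : DifferentiableAt ℝ f x) (hg : DifferentiableAt ℝ g x) (w : ℝ × ℝ) :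
    pd w (fun y => f y * g y) x = f x * pd w g x + g x * pd w f x := by
  simp [pd, fderiv_fun_mul hf hg, smul_eq_mul]

lemma pd_const_mul (hf : DifferentiableAt ℝ f x) (c : ℂ) (w : ℝ × ℝ) :
    pd w (fun y => c * f y) x = c * pd w f x := by
  simp [pd, fderiv_const_mul hf c, smul_eq_mul]

lemma pd_comp {F : ℂ → ℂ} {F' : ℂ} (hF : HasDerivAt F F' (f x))
    (hf : DifferentiableAt ℝ f x) (w : ℝ × ℝ) :
    pd w (fun y => F (f y)) x = F' * pd w f x := by
  have h := hF.comp_hasFDerivAt x hf.hasFDerivAt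
  have : fderiv ℝ (fun y => F (f y)) x = F' • fderiv ℝ f x := h.fderiv
  simp [pd, this, smul_eq_mul]

lemma diffAt_comp {F : ℂ → ℂ} {F' : ℂ} (hF : HasDerivAt F F' (f x))
    (hf : DifferentiableAt ℝ f x) : DifferentiableAt ℝ (fun y => F (f y)) x :=
  (hF.comp_hasFDerivAt x hf.hasFDerivAt).differentiableAt

lemma pd_inv (hf : DifferentiableAt ℝ f x) (h0 : f x ≠ 0) (w : ℝ × ℝ) :
    pd w (fun y => (f y)⁻¹) x = -(f x ^ 2)⁻¹ * pd w f x :=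
  pd_comp (hasDerivAt_inv h0) hf w

lemma pd_div (hf : DifferentiableAt ℝ f x) (hg : DifferentiableAt ℝ g x) (h0 : g x ≠ 0)
    (w : ℝ × ℝ) :
    pd w (fun y => f y / g y) x = (pd w f x * g x - f x * pd w g x) / g x ^ 2 := by
  have : (fun y => f y / g y) = fun y => f y * (g y)⁻¹ := by
    funext y; rw [div_eq_mul_inv]
  rw [this, pd_mul (g := fun y => (g y)⁻¹) hf (hg.inv h0), pd_inv hg h0]
  field_simp
  ring

lemma pd_exp (hf : DifferentiableAt ℝ f x) (w : ℝ × ℝ) :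
    pd w (fun y => Complex.exp (f y)) x = Complex.exp (f x) * pd w f x :=
  pd_comp (Complex.hasDerivAt_exp (f x)) hf w

lemma pd_cosh (hf : DifferentiableAt ℝ f x) (w : ℝ × ℝ) :
    pd w (fun y => Complex.cosh (f y)) x = Complex.sinh (f x) * pd w f x :=
  pd_comp (Complex.hasDerivAt_cosh (f x)) hf w

lemma pd_sinh (hf : DifferentiableAt ℝ f x) (w : ℝ × ℝ) :
    pd w (fun y => Complex.sinh (f y)) x = Complex.cosh (f x) * pd w f x :=
  pd_comp (Complex.hasDerivAt_sinh (f x)) hf w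

lemma pdu_eq (f : ℝ × ℝ → ℂ) : pdu f = pd (1, 0) f := rfl
lemma pdv_eq (f : ℝ × ℝ → ℂ) : pdv f = pd (0, 1) f := rfl

/-- `pd w f` as a composition with a CLM application. -/
lemma pd_eq_clm (f : ℝ × ℝ → ℂ) (w : ℝ × ℝ) :
    pd w f = fun y => (ContinuousLinearMap.apply ℝ ℂ w) (fderiv ℝ f y) := rfl

lemma diffAt_pd (h : ContDiffAt ℝ 2 f x) (w : ℝ × ℝ) : DifferentiableAt ℝ (pd w f) x := by
  have h1 : ContDiffAt ℝ 1 (fderiv ℝ f) x := h.fderiv_right (le_refl 2)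
  rw [pd_eq_clm]
  exact ((ContinuousLinearMap.apply ℝ ℂ w).differentiable.differentiableAt).comp x
    (h1.differentiableAt one_ne_zero)

lemma pd_pd (h : DifferentiableAt ℝ (fderiv ℝ f) x) (v w : ℝ × ℝ) :
    pd v (pd w f) x = fderiv ℝ (fderiv ℝ f) x v w := by
  have h2 : HasFDerivAt (pd w f)
      ((ContinuousLinearMap.apply ℝ ℂ w).comp (fderiv ℝ (fderiv ℝ f) x)) x :=
    (ContinuousLinearMap.apply ℝ ℂ w).hasFDerivAt.comp x h.hasFDerivAt
  show fderiv ℝ (pd w f) x v = _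
  rw [h2.fderiv]; rfl

lemma pd_comm (h : ContDiffAt ℝ 2 f x) (v w : ℝ × ℝ) :
    pd v (pd w f) x = pd w (pd v f) x := by
  have hd : DifferentiableAt ℝ (fderiv ℝ f) x :=
    (h.fderiv_right (m := 1) (le_refl 2)).differentiableAt one_ne_zero
  rw [pd_pd hd, pd_pd hd]
  exact h.isSymmSndFDerivAt (by norm_num) v w

end PD

lemma pd_sq {f : ℝ × ℝ → ℂ} {x : ℝ × ℝ} (hf : DifferentiableAt ℝ f x) (w : ℝ × ℝ) :
    pd w (fun y => f y ^ 2) x = 2 * f x * pd w f x := by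
  have := pd_comp (F := fun z : ℂ => z ^ 2) (hasDerivAt_pow 2 (f x)) hf w
  simpa [mul_assoc] using this

lemma diff_sq {f : ℝ × ℝ → ℂ} {x : ℝ × ℝ} (hf : DifferentiableAt ℝ f x) :
    DifferentiableAt ℝ (fun y => f y ^ 2) x :=
  diffAt_comp (hasDerivAt_pow 2 (f x)) hf

lemma diff_div {f g : ℝ × ℝ → ℂ} {x : ℝ × ℝ} (hf : DifferentiableAt ℝ f x)
    (hg : DifferentiableAt ℝ g x) (h0 : g x ≠ 0) :
    DifferentiableAt ℝ (fun y => f y / g y) x := by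
  simp only [div_eq_mul_inv]
  exact hf.mul (hg.inv h0)

section Holo

variable {G : ℂ → ℂ} {V : Set ℂ}

/-- derivative facts for composition of a holomorphic map with a real-linear map. -/
lemma holo_comp_diff (hV : IsOpen V) (hG : DifferentiableOn ℂ G V)
    (m : (ℝ × ℝ) →L[ℝ] ℂ) {x : ℝ × ℝ} (hx : m x ∈ V) :
    DifferentiableAt ℝ (fun y => G (m y)) x ∧
      ∀ w, pd w (fun y => G (m y)) x = deriv G (m x) * m w := by
  have hd : DifferentiableAt ℂ G (m x) := hG.differentiableAt (hV.mem_nhds hx)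
  have h := hd.hasDerivAt.comp_hasFDerivAt x m.hasFDerivAt
  refine ⟨h.differentiableAt, fun w => ?_⟩
  have := h.fderiv
  simp only [Function.comp_def] at this
  simp [pd, this, smul_eq_mul]

lemma holo_comp_contDiffAt (hV : IsOpen V) (hG : DifferentiableOn ℂ G V)
    (m : (ℝ × ℝ) →L[ℝ] ℂ) {x : ℝ × ℝ} (hx : m x ∈ V) (n : ℕ) :
    ContDiffAt ℝ n (fun y => G (m y)) x := by
  have hGa : AnalyticAt ℂ G (m x) := (hG.analyticOnNhd hV) (m x) hx
  have h1 : ContDiffAt ℂ n G (m x) := hGa.contDiffAt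
  exact (h1.restrict_scalars ℝ).comp x (m.contDiff.contDiffAt)

lemma holo_comp_lap (hV : IsOpen V) (hG : DifferentiableOn ℂ G V)
    (m : (ℝ × ℝ) →L[ℝ] ℂ) (hm : (m (1, 0)) ^ 2 + (m (0, 1)) ^ 2 = 0)
    {x : ℝ × ℝ} (hx : m x ∈ V) :
    lap (fun y => G (m y)) x = 0 := by
  have hGa : AnalyticOnNhd ℂ G V := hG.analyticOnNhd hV
  have hG' : DifferentiableOn ℂ (deriv G) V := (hGa.deriv).differentiableOn
  have hmem : ∀ᶠ y in nhds x, m y ∈ V := m.continuous.continuousAt.preimage_mem_nhds (hV.mem_nhds hx)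
  have key : ∀ w : ℝ × ℝ, pd w (fun y => G (m y)) =ᶠ[nhds x] fun y => m w * deriv G (m y) := by
    intro w
    filter_upwards [hmem] with y hy
    rw [(holo_comp_diff hV hG m hy).2 w, mul_comm]
  have key2 : ∀ w v : ℝ × ℝ, pd v (pd w (fun y => G (m y))) x
      = m w * (deriv (deriv G) (m x) * m v) := by
    intro w v
    rw [pd_congr (key w) v,
      pd_const_mul ((holo_comp_diff hV hG' m hx).1) (m w) v,
      (holo_comp_diff hV hG' m hx).2 v]
  show pd (1,0) (pd (1,0) _) x + pd (0,1) (pd (0,1) _) x = 0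
  rw [key2 (1,0) (1,0), key2 (0,1) (0,1)]
  have : m (1,0) * (deriv (deriv G) (m x) * m (1,0)) + m (0,1) * (deriv (deriv G) (m x) * m (0,1))
      = deriv (deriv G) (m x) * ((m (1,0))^2 + (m (0,1))^2) := by ring
  rw [this, hm, mul_zero]

end Holo

section Package

open ContinuousLinearMap in
noncomputable def kL : (ℝ × ℝ) →L[ℝ] ℂ :=
  (fst ℝ ℝ ℝ).smulRight 1 + (snd ℝ ℝ ℝ).smulRight Complex.I

open ContinuousLinearMap in
noncomputable def kbL : (ℝ × ℝ) →L[ℝ] ℂ :=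
  (fst ℝ ℝ ℝ).smulRight 1 + (snd ℝ ℝ ℝ).smulRight (-Complex.I)

@[simp] lemma kL_apply (w : ℝ × ℝ) : kL w = w.1 + w.2 * Complex.I := by
  simp [kL, Complex.real_smul]

@[simp] lemma kbL_apply (w : ℝ × ℝ) : kbL w = w.1 - w.2 * Complex.I := by
  simp [kbL, Complex.real_smul]; ring

noncomputable def iL : ℂ →L[ℝ] ℝ × ℝ := Complex.reCLM.prod Complex.imCLM

@[simp] lemma iL_apply (z : ℂ) : iL z = (z.re, z.im) := rfl

noncomputable def jL : ℂ →L[ℝ] ℝ × ℝ := Complex.reCLM.prod (-Complex.imCLM)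

@[simp] lemma jL_apply (z : ℂ) : jL z = (z.re, -z.im) := rfl

private lemma alg1 (u p q : ℂ) :
    (u.re : ℂ) * p + (u.im : ℂ) * q - Complex.I * ((u.re : ℂ) * q + (u.im : ℂ) * (-p))
      = u * (p - Complex.I * q) := by
  set a := u.re
  set b := u.im
  have h : (a : ℂ) + (b : ℂ) * Complex.I = u := Complex.re_add_im u
  rw [← h]; linear_combination ((b : ℂ) * q) * Complex.I_sq

private lemma alg2 (u p q : ℂ) :
    (u.re : ℂ) * p + (-u.im : ℂ) * q + Complex.I * ((u.re : ℂ) * q + (-u.im : ℂ) * (-p))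
      = u * (p + Complex.I * q) := by
  set a := u.re
  set b := u.im
  have h : (a : ℂ) + (b : ℂ) * Complex.I = u := Complex.re_add_im u
  rw [← h]; linear_combination (-(b : ℂ) * q) * Complex.I_sq

variable {U : Set (ℝ × ℝ)} {θ : ℝ × ℝ → ℂ}

/-- decomposition of a real-CLM on ℝ² applied to a basis expansion -/
private lemma clm_expand (A : (ℝ × ℝ) →L[ℝ] ℂ) (u : ℝ × ℝ) :
    A u = (u.1 : ℂ) * A (1, 0) + (u.2 : ℂ) * A (0, 1) := by
  have hu : u = u.1 • ((1:ℝ), (0:ℝ)) + u.2 • ((0:ℝ), (1:ℝ)) := by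
    simp [Prod.ext_iff]
  rw [hu, map_add, map_smul, map_smul]
  simp [Complex.real_smul]

lemma g_differentiableOn (hU : IsOpen U) (hθ : ContDiffOn ℝ 2 θ U)
    (hharm : ∀ p ∈ U, lap θ p = 0) :
    DifferentiableOn ℂ (fun z : ℂ => pdu θ (iL z) - Complex.I * pdv θ (iL z)) (iL ⁻¹' U) := by
  intro z hz
  set x : ℝ × ℝ := iL z with hxdef
  have hx : x ∈ U := hz
  have hθx : ContDiffAt ℝ 2 θ x := hθ.contDiffAt (hU.mem_nhds hx)
  have da : DifferentiableAt ℝ (pdu θ) x := diffAt_pd hθx (1, 0)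
  have db : DifferentiableAt ℝ (pdv θ) x := diffAt_pd hθx (0, 1)
  have hA : HasFDerivAt (fun w : ℂ => pdu θ (iL w)) ((fderiv ℝ (pdu θ) x).comp iL) z :=
    HasFDerivAt.comp (g := pdu θ) (f := iL) z (by rw [← hxdef]; exact da.hasFDerivAt) iL.hasFDerivAt
  have hB : HasFDerivAt (fun w : ℂ => pdv θ (iL w)) ((fderiv ℝ (pdv θ) x).comp iL) z :=
    HasFDerivAt.comp (g := pdv θ) (f := iL) z (by rw [← hxdef]; exact db.hasFDerivAt) iL.hasFDerivAt
  have hg : HasFDerivAt (fun w : ℂ => pdu θ (iL w) - Complex.I * pdv θ (iL w))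
      ((fderiv ℝ (pdu θ) x).comp iL - Complex.I • ((fderiv ℝ (pdv θ) x).comp iL)) z :=
    hA.sub (hB.const_mul Complex.I)
  set p := pd (1,0) (pd (1,0) θ) x
  set q := pd (0,1) (pd (1,0) θ) x
  have hsym : pd (1,0) (pd (0,1) θ) x = q := pd_comm hθx (1,0) (0,1)
  have hharm' : pd (0,1) (pd (0,1) θ) x = -p := by
    have := hharm x hx
    have h2 : pd (1,0) (pd (1,0) θ) x + pd (0,1) (pd (0,1) θ) x = 0 := this
    linear_combination h2
  have hE : (ContinuousLinearMap.smulRight (1 : ℂ →L[ℂ] ℂ) (p - Complex.I * q)).restrictScalars ℝ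
      = (fderiv ℝ (pdu θ) x).comp iL - Complex.I • ((fderiv ℝ (pdv θ) x).comp iL) := by
    ext u
    simp only [ContinuousLinearMap.coe_restrictScalars', ContinuousLinearMap.coe_sub',
      Pi.sub_apply, ContinuousLinearMap.coe_smul', Pi.smul_apply,
      ContinuousLinearMap.coe_comp', Function.comp_apply,
      ContinuousLinearMap.smulRight_apply, ContinuousLinearMap.one_apply, smul_eq_mul]
    rw [clm_expand (fderiv ℝ (pdu θ) x) (iL u), clm_expand (fderiv ℝ (pdv θ) x) (iL u)]
    have e1 : (fderiv ℝ (pdu θ) x) (1, 0) = p := rfl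
    have e2 : (fderiv ℝ (pdu θ) x) (0, 1) = q := rfl
    have e3 : (fderiv ℝ (pdv θ) x) (1, 0) = q := hsym
    have e4 : (fderiv ℝ (pdv θ) x) (0, 1) = -p := hharm'
    rw [e1, e2, e3, e4]
    simp only [iL_apply]
    rw [← alg1 u p q]
  have : HasFDerivAt (𝕜 := ℂ) (fun w : ℂ => pdu θ (iL w) - Complex.I * pdv θ (iL w))
      (ContinuousLinearMap.smulRight (1 : ℂ →L[ℂ] ℂ) (p - Complex.I * q)) z :=
    hasFDerivAt_of_restrictScalars ℝ hg hE
  exact this.differentiableAt.differentiableWithinAt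

lemma h_differentiableOn (hU : IsOpen U) (hθ : ContDiffOn ℝ 2 θ U)
    (hharm : ∀ p ∈ U, lap θ p = 0) :
    DifferentiableOn ℂ (fun z : ℂ => pdu θ (jL z) + Complex.I * pdv θ (jL z)) (jL ⁻¹' U) := by
  intro z hz
  set x : ℝ × ℝ := jL z with hxdef
  have hx : x ∈ U := hz
  have hθx : ContDiffAt ℝ 2 θ x := hθ.contDiffAt (hU.mem_nhds hx)
  have da : DifferentiableAt ℝ (pdu θ) x := diffAt_pd hθx (1, 0)
  have db : DifferentiableAt ℝ (pdv θ) x := diffAt_pd hθx (0, 1)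
  have hA : HasFDerivAt (fun w : ℂ => pdu θ (jL w)) ((fderiv ℝ (pdu θ) x).comp jL) z :=
    HasFDerivAt.comp (g := pdu θ) (f := jL) z (by rw [← hxdef]; exact da.hasFDerivAt) jL.hasFDerivAt
  have hB : HasFDerivAt (fun w : ℂ => pdv θ (jL w)) ((fderiv ℝ (pdv θ) x).comp jL) z :=
    HasFDerivAt.comp (g := pdv θ) (f := jL) z (by rw [← hxdef]; exact db.hasFDerivAt) jL.hasFDerivAt
  have hg : HasFDerivAt (fun w : ℂ => pdu θ (jL w) + Complex.I * pdv θ (jL w))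
      ((fderiv ℝ (pdu θ) x).comp jL + Complex.I • ((fderiv ℝ (pdv θ) x).comp jL)) z :=
    hA.add (hB.const_mul Complex.I)
  set p := pd (1,0) (pd (1,0) θ) x
  set q := pd (0,1) (pd (1,0) θ) x
  have hsym : pd (1,0) (pd (0,1) θ) x = q := pd_comm hθx (1,0) (0,1)
  have hharm' : pd (0,1) (pd (0,1) θ) x = -p := by
    have h2 : pd (1,0) (pd (1,0) θ) x + pd (0,1) (pd (0,1) θ) x = 0 := hharm x hx
    linear_combination h2
  have hE : (ContinuousLinearMap.smulRight (1 : ℂ →L[ℂ] ℂ) (p + Complex.I * q)).restrictScalars ℝ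
      = (fderiv ℝ (pdu θ) x).comp jL + Complex.I • ((fderiv ℝ (pdv θ) x).comp jL) := by
    ext u
    simp only [ContinuousLinearMap.coe_restrictScalars', ContinuousLinearMap.coe_add',
      Pi.add_apply, ContinuousLinearMap.coe_smul', Pi.smul_apply,
      ContinuousLinearMap.coe_comp', Function.comp_apply,
      ContinuousLinearMap.smulRight_apply, ContinuousLinearMap.one_apply, smul_eq_mul]
    rw [clm_expand (fderiv ℝ (pdu θ) x) (jL u), clm_expand (fderiv ℝ (pdv θ) x) (jL u)]
    have e1 : (fderiv ℝ (pdu θ) x) (1, 0) = p := rfl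
    have e2 : (fderiv ℝ (pdu θ) x) (0, 1) = q := rfl
    have e3 : (fderiv ℝ (pdv θ) x) (1, 0) = q := hsym
    have e4 : (fderiv ℝ (pdv θ) x) (0, 1) = -p := hharm'
    rw [e1, e2, e3, e4]
    simp only [jL_apply]
    push_cast
    rw [← alg2 u p q]
  have : HasFDerivAt (𝕜 := ℂ) (fun w : ℂ => pdu θ (jL w) + Complex.I * pdv θ (jL w))
      (ContinuousLinearMap.smulRight (1 : ℂ →L[ℂ] ℂ) (p + Complex.I * q)) z :=
    hasFDerivAt_of_restrictScalars ℝ hg hE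
  exact this.differentiableAt.differentiableWithinAt

end Package

section Package2

variable {f g : ℝ × ℝ → ℂ} {x : ℝ × ℝ}

lemma lap_comb (hf : ContDiffAt ℝ 2 f x) (hg : ContDiffAt ℝ 2 g x) (c d : ℂ) :
    lap (fun y => c * f y + d * g y) x = c * lap f x + d * lap g x := by
  have hev : ∀ w : ℝ × ℝ, pd w (fun y => c * f y + d * g y)
      =ᶠ[nhds x] fun y => c * pd w f y + d * pd w g y := by
    intro w
    filter_upwards [hf.eventually (by simp), hg.eventually (by simp)] with y hfy hgy
    have dfy : DifferentiableAt ℝ f y := hfy.differentiableAt two_ne_zero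
    have dgy : DifferentiableAt ℝ g y := hgy.differentiableAt two_ne_zero
    rw [pd_add (dfy.const_mul c) (dgy.const_mul d), pd_const_mul dfy c, pd_const_mul dgy d]
  have key : ∀ w : ℝ × ℝ, pd w (pd w (fun y => c * f y + d * g y)) x
      = c * pd w (pd w f) x + d * pd w (pd w g) x := by
    intro w
    rw [pd_congr (hev w) w,
      pd_add ((diffAt_pd hf w).const_mul c) ((diffAt_pd hg w).const_mul d),
      pd_const_mul (diffAt_pd hf w) c, pd_const_mul (diffAt_pd hg w) d]
  show pd (1,0) (pd (1,0) _) x + pd (0,1) (pd (0,1) _) x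
      = c * (pd (1,0) (pd (1,0) f) x + pd (0,1) (pd (0,1) f) x)
      + d * (pd (1,0) (pd (1,0) g) x + pd (0,1) (pd (0,1) g) x)
  rw [key (1,0), key (0,1)]
  ring

variable {U : Set (ℝ × ℝ)} {θ : ℝ × ℝ → ℂ}

lemma ab_package (hU : IsOpen U) (hθ : ContDiffOn ℝ 2 θ U)
    (hharm : ∀ p ∈ U, lap θ p = 0) (hx : x ∈ U) :
    ContDiffAt ℝ 2 (pdu θ) x ∧ ContDiffAt ℝ 2 (pdv θ) x ∧
      lap (pdu θ) x = 0 ∧ lap (pdv θ) x = 0 := by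
  have hGd := g_differentiableOn hU hθ hharm
  have hHd := h_differentiableOn hU hθ hharm
  have hV : IsOpen (iL ⁻¹' U) := hU.preimage iL.continuous
  have hV' : IsOpen (jL ⁻¹' U) := hU.preimage jL.continuous
  have e1 : ∀ y : ℝ × ℝ, iL (kL y) = y := by intro y; simp
  have e2 : ∀ y : ℝ × ℝ, jL (kbL y) = y := by intro y; simp
  have hmem1 : kL x ∈ iL ⁻¹' U := by simp [Set.mem_preimage, e1 x, hx]
  have hmem2 : kbL x ∈ jL ⁻¹' U := by simp [Set.mem_preimage, e2 x, hx]
  have hk : (kL (1,0)) ^ 2 + (kL (0,1)) ^ 2 = 0 := by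
    simp [Complex.I_sq]
  have hkb : (kbL (1,0)) ^ 2 + (kbL (0,1)) ^ 2 = 0 := by
    simp [Complex.I_sq]
  have hgg2 : ContDiffAt ℝ 2 (fun y => pdu θ (iL (kL y)) - Complex.I * pdv θ (iL (kL y))) x := by
    exact_mod_cast holo_comp_contDiffAt hV hGd kL hmem1 2
  have hhh2 : ContDiffAt ℝ 2 (fun y => pdu θ (jL (kbL y)) + Complex.I * pdv θ (jL (kbL y))) x := by
    exact_mod_cast holo_comp_contDiffAt hV' hHd kbL hmem2 2
  have lgg : lap (fun y => pdu θ (iL (kL y)) - Complex.I * pdv θ (iL (kL y))) x = 0 :=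
    holo_comp_lap hV hGd kL hk hmem1
  have lhh : lap (fun y => pdu θ (jL (kbL y)) + Complex.I * pdv θ (jL (kbL y))) x = 0 :=
    holo_comp_lap hV' hHd kbL hkb hmem2
  have ea : pdu θ = fun y => (1/2 : ℂ) * (pdu θ (iL (kL y)) - Complex.I * pdv θ (iL (kL y)))
      + (1/2 : ℂ) * (pdu θ (jL (kbL y)) + Complex.I * pdv θ (jL (kbL y))) := by
    funext y
    rw [e1 y, e2 y]; ring
  have eb : pdv θ = fun y => (Complex.I/2) * (pdu θ (iL (kL y)) - Complex.I * pdv θ (iL (kL y)))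
      + (-Complex.I/2) * (pdu θ (jL (kbL y)) + Complex.I * pdv θ (jL (kbL y))) := by
    funext y
    rw [e1 y, e2 y]
    have : Complex.I * Complex.I = -1 := Complex.I_mul_I
    field_simp
    linear_combination (2 * pdv θ y) * this
  refine ⟨?_, ?_, ?_, ?_⟩
  · rw [ea]; exact (contDiffAt_const.mul hgg2).add (contDiffAt_const.mul hhh2)
  · rw [eb]; exact (contDiffAt_const.mul hgg2).add (contDiffAt_const.mul hhh2)
  · rw [ea, lap_comb hgg2 hhh2, lgg, lhh]; ring
  · rw [eb, lap_comb hgg2 hhh2, lgg, lhh]; ring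

end Package2

theorem stmt12 (U : Set (ℝ × ℝ)) (hU : IsOpen U) (θ : ℝ × ℝ → ℂ)
    (hθ : ContDiffOn ℝ 2 θ U)
    (hharm : ∀ p ∈ U, lap θ p = 0)
    (hc : ∀ p ∈ U, Complex.cosh (θ p) ≠ 0)
    (hd : ∀ p ∈ U, (pdu θ p) ^ 2 + (pdv θ p) ^ 2 ≠ 0)
    (α : ℝ × ℝ → ℂ)
    (hα : ∀ p, α p = -((pdu θ p) ^ 2 + (pdv θ p) ^ 2) / (Complex.cosh (θ p)) ^ 2)
    (L : ℝ × ℝ → ℂ) (hL : ContDiffOn ℝ 2 L U)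
    (hlog : ∀ p ∈ U, Complex.exp (L p) = α p) :
    ∀ p ∈ U, lap L p = 2 * α p := by
  intro p₀ hp₀
  have hmem : U ∈ nhds p₀ := hU.mem_nhds hp₀
  have hCD : ∀ x ∈ U, ContDiffAt ℝ 2 θ x := fun x hx => hθ.contDiffAt (hU.mem_nhds hx)
  have hpkg : ∀ x ∈ U, ContDiffAt ℝ 2 (pdu θ) x ∧ ContDiffAt ℝ 2 (pdv θ) x ∧
      lap (pdu θ) x = 0 ∧ lap (pdv θ) x = 0 := fun x hx => ab_package hU hθ hharm hx
  have dθ : ∀ x ∈ U, DifferentiableAt ℝ θ x := fun x hx =>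
    (hCD x hx).differentiableAt two_ne_zero
  have da : ∀ x ∈ U, DifferentiableAt ℝ (pdu θ) x := fun x hx =>
    ((hpkg x hx).1).differentiableAt two_ne_zero
  have db : ∀ x ∈ U, DifferentiableAt ℝ (pdv θ) x := fun x hx =>
    ((hpkg x hx).2.1).differentiableAt two_ne_zero
  have dL : ∀ x ∈ U, DifferentiableAt ℝ L x := fun x hx =>
    (hL.contDiffAt (hU.mem_nhds hx)).differentiableAt two_ne_zero
  have dcosh : ∀ x ∈ U, DifferentiableAt ℝ (fun y => Complex.cosh (θ y)) x := fun x hx =>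
    diffAt_comp (Complex.hasDerivAt_cosh (θ x)) (dθ x hx)
  have dsinh : ∀ x ∈ U, DifferentiableAt ℝ (fun y => Complex.sinh (θ y)) x := fun x hx =>
    diffAt_comp (Complex.hasDerivAt_sinh (θ x)) (dθ x hx)
  have dW : ∀ x ∈ U, DifferentiableAt ℝ (fun y => pdu θ y ^ 2 + pdv θ y ^ 2) x := fun x hx =>
    (diff_sq (da x hx)).add (diff_sq (db x hx))
  have hαfun : α = fun y => -(pdu θ y ^ 2 + pdv θ y ^ 2) / Complex.cosh (θ y) ^ 2 := funext hα
  have hsymf : ∀ x ∈ U, pd (1,0) (pdv θ) x = pd (0,1) (pdu θ) x := fun x hx =>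
    pd_comm (hCD x hx) (1,0) (0,1)
  have hharmf : ∀ x ∈ U, pd (0,1) (pdv θ) x = -pd (1,0) (pdu θ) x := by
    intro x hx
    have h2 : pd (1,0) (pdu θ) x + pd (0,1) (pdv θ) x = 0 := hharm x hx
    linear_combination h2
  have pdW : ∀ x ∈ U, ∀ w, pd w (fun y => pdu θ y ^ 2 + pdv θ y ^ 2) x
      = 2 * pdu θ x * pd w (pdu θ) x + 2 * pdv θ x * pd w (pdv θ) x := by
    intro x hx w
    rw [pd_add (diff_sq (da x hx)) (diff_sq (db x hx)), pd_sq (da x hx), pd_sq (db x hx)]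
  have keyL : ∀ x ∈ U, ∀ w, pd w L x
      = pd w (fun y => pdu θ y ^ 2 + pdv θ y ^ 2) x / (pdu θ x ^ 2 + pdv θ x ^ 2)
        - 2 * (Complex.sinh (θ x) / Complex.cosh (θ x)) * pd w θ x := by
    intro x hx w
    have hW0 : pdu θ x ^ 2 + pdv θ x ^ 2 ≠ 0 := hd x hx
    have hc0 : Complex.cosh (θ x) ≠ 0 := hc x hx
    have hα0x : α x ≠ 0 := by
      rw [hα x]
      exact div_ne_zero (neg_ne_zero.mpr hW0) (pow_ne_zero 2 hc0)
    have hev : (fun y => Complex.exp (L y)) =ᶠ[nhds x] α := by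
      filter_upwards [hU.mem_nhds hx] with y hy using hlog y hy
    have h1 : pd w α x = α x * pd w L x := by
      rw [← pd_congr hev w, pd_exp (dL x hx) w, hlog x hx]
    have h2 : pd w α x = (-(pd w (fun y => pdu θ y ^ 2 + pdv θ y ^ 2) x)
          * Complex.cosh (θ x) ^ 2
        - -(pdu θ x ^ 2 + pdv θ x ^ 2)
          * (2 * Complex.cosh (θ x) * (Complex.sinh (θ x) * pd w θ x)))
        / (Complex.cosh (θ x) ^ 2) ^ 2 := by
      conv_lhs => rw [hαfun]
      rw [pd_div (f := fun y => -(pdu θ y ^ 2 + pdv θ y ^ 2)) ((dW x hx).neg) (diff_sq (dcosh x hx)) (pow_ne_zero 2 hc0) w,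
        pd_neg, pd_sq (dcosh x hx), pd_cosh (dθ x hx)]
    have key : α x * (pd w (fun y => pdu θ y ^ 2 + pdv θ y ^ 2) x / (pdu θ x ^ 2 + pdv θ x ^ 2)
        - 2 * (Complex.sinh (θ x) / Complex.cosh (θ x)) * pd w θ x) = pd w α x := by
      rw [h2, hα x]
      field_simp
      ring
    apply mul_left_cancel₀ hα0x
    rw [← h1, key]
  -- eventual formulas for the first partials of L near p₀
  have evu : pd (1,0) L =ᶠ[nhds p₀] fun y =>
      (2 * pdu θ y * pd (1,0) (pdu θ) y + 2 * pdv θ y * pd (0,1) (pdu θ) y)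
        / (pdu θ y ^ 2 + pdv θ y ^ 2)
      - 2 * (Complex.sinh (θ y) / Complex.cosh (θ y)) * pdu θ y := by
    filter_upwards [hmem] with y hy
    rw [keyL y hy (1,0), pdW y hy (1,0), hsymf y hy]
    rfl
  have evv : pd (0,1) L =ᶠ[nhds p₀] fun y =>
      (2 * pdu θ y * pd (0,1) (pdu θ) y - 2 * pdv θ y * pd (1,0) (pdu θ) y)
        / (pdu θ y ^ 2 + pdv θ y ^ 2)
      - 2 * (Complex.sinh (θ y) / Complex.cosh (θ y)) * pdv θ y := by
    filter_upwards [hmem] with y hy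
    rw [keyL y hy (0,1), pdW y hy (0,1), hharmf y hy]
    have e : pd (0,1) θ y = pdv θ y := rfl
    rw [e]
    ring
  -- differentiability at p₀ of all the pieces
  have dP : DifferentiableAt ℝ (pd (1,0) (pdu θ)) p₀ := diffAt_pd (hpkg p₀ hp₀).1 (1,0)
  have dQ : DifferentiableAt ℝ (pd (0,1) (pdu θ)) p₀ := diffAt_pd (hpkg p₀ hp₀).1 (0,1)
  have dA := da p₀ hp₀
  have dB := db p₀ hp₀
  have dNu : DifferentiableAt ℝ (fun y =>
      2 * pdu θ y * pd (1,0) (pdu θ) y + 2 * pdv θ y * pd (0,1) (pdu θ) y) p₀ :=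
    ((dA.const_mul 2).mul dP).add ((dB.const_mul 2).mul dQ)
  have dNv : DifferentiableAt ℝ (fun y =>
      2 * pdu θ y * pd (0,1) (pdu θ) y - 2 * pdv θ y * pd (1,0) (pdu θ) y) p₀ :=
    ((dA.const_mul 2).mul dQ).sub ((dB.const_mul 2).mul dP)
  have dtanh : DifferentiableAt ℝ (fun y => Complex.sinh (θ y) / Complex.cosh (θ y)) p₀ :=
    diff_div (dsinh p₀ hp₀) (dcosh p₀ hp₀) (hc p₀ hp₀)
  have dTu : DifferentiableAt ℝ
      (fun y => 2 * (Complex.sinh (θ y) / Complex.cosh (θ y)) * pdu θ y) p₀ :=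
    (dtanh.const_mul 2).mul dA
  have dTv : DifferentiableAt ℝ
      (fun y => 2 * (Complex.sinh (θ y) / Complex.cosh (θ y)) * pdv θ y) p₀ :=
    (dtanh.const_mul 2).mul dB
  have dDivu : DifferentiableAt ℝ (fun y =>
      (2 * pdu θ y * pd (1,0) (pdu θ) y + 2 * pdv θ y * pd (0,1) (pdu θ) y)
        / (pdu θ y ^ 2 + pdv θ y ^ 2)) p₀ := diff_div dNu (dW p₀ hp₀) (hd p₀ hp₀)
  have dDivv : DifferentiableAt ℝ (fun y =>
      (2 * pdu θ y * pd (0,1) (pdu θ) y - 2 * pdv θ y * pd (1,0) (pdu θ) y)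
        / (pdu θ y ^ 2 + pdv θ y ^ 2)) p₀ := diff_div dNv (dW p₀ hp₀) (hd p₀ hp₀)
  -- relations among second derivatives
  have hlapa : pd (1,0) (pd (1,0) (pdu θ)) p₀ + pd (0,1) (pd (0,1) (pdu θ)) p₀ = 0 :=
    (hpkg p₀ hp₀).2.2.1
  have hlapb : pd (1,0) (pd (1,0) (pdv θ)) p₀ + pd (0,1) (pd (0,1) (pdv θ)) p₀ = 0 :=
    (hpkg p₀ hp₀).2.2.2
  have e1 : pd (1,0) (pdv θ) =ᶠ[nhds p₀] pd (0,1) (pdu θ) :=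
    Filter.eventuallyEq_of_mem hmem fun y hy => hsymf y hy
  have e2 : pd (0,1) (pdv θ) =ᶠ[nhds p₀] fun y => -pd (1,0) (pdu θ) y :=
    Filter.eventuallyEq_of_mem hmem fun y hy => hharmf y hy
  rw [pd_congr e1 (1,0), pd_congr e2 (0,1), pd_neg] at hlapb
  have hsymm2 : pd (1,0) (pd (0,1) (pdu θ)) p₀ - pd (0,1) (pd (1,0) (pdu θ)) p₀ = 0 := by
    linear_combination hlapb
  have hcs : Complex.cosh (θ p₀) ^ 2 - Complex.sinh (θ p₀) ^ 2 = 1 :=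
    Complex.cosh_sq_sub_sinh_sq (θ p₀)
  -- branch computations
  have epu : pd (1,0) θ = pdu θ := rfl
  have epv : pd (0,1) θ = pdv θ := rfl
  have Xu : pd (1,0) (pd (1,0) L) p₀ =
      ((2 * pdu θ p₀ * pd (1,0) (pd (1,0) (pdu θ)) p₀
          + 2 * pd (1,0) (pdu θ) p₀ ^ 2
          + 2 * pdv θ p₀ * pd (1,0) (pd (0,1) (pdu θ)) p₀
          + 2 * pd (0,1) (pdu θ) p₀ ^ 2) * (pdu θ p₀ ^ 2 + pdv θ p₀ ^ 2)
        - (2 * pdu θ p₀ * pd (1,0) (pdu θ) p₀ + 2 * pdv θ p₀ * pd (0,1) (pdu θ) p₀) ^ 2)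
        / (pdu θ p₀ ^ 2 + pdv θ p₀ ^ 2) ^ 2
      - 2 * (Complex.sinh (θ p₀) / Complex.cosh (θ p₀)) * pd (1,0) (pdu θ) p₀
      - 2 * pdu θ p₀ ^ 2 * (Complex.cosh (θ p₀) ^ 2 - Complex.sinh (θ p₀) ^ 2)
        / Complex.cosh (θ p₀) ^ 2 := by
    rw [pd_congr evu (1,0)]
    rw [pd_sub dDivu dTu (1,0)]
    rw [pd_div dNu (dW p₀ hp₀) (hd p₀ hp₀) (1,0)]
    rw [pd_add (f := fun y => 2 * pdu θ y * pd (1,0) (pdu θ) y)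
      (g := fun y => 2 * pdv θ y * pd (0,1) (pdu θ) y) ((dA.const_mul 2).mul dP) ((dB.const_mul 2).mul dQ) (1,0)]
    rw [pd_mul (dA.const_mul 2) dP (1,0), pd_mul (dB.const_mul 2) dQ (1,0)]
    rw [pd_const_mul dA 2 (1,0), pd_const_mul dB 2 (1,0)]
    rw [pdW p₀ hp₀ (1,0)]
    rw [pd_mul (dtanh.const_mul 2) dA (1,0), pd_const_mul dtanh 2 (1,0)]
    rw [pd_div (dsinh p₀ hp₀) (dcosh p₀ hp₀) (hc p₀ hp₀) (1,0)]
    rw [pd_sinh (dθ p₀ hp₀) (1,0), pd_cosh (dθ p₀ hp₀) (1,0)]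
    rw [hsymf p₀ hp₀, epu]
    ring
  have Xv : pd (0,1) (pd (0,1) L) p₀ =
      ((2 * pdu θ p₀ * pd (0,1) (pd (0,1) (pdu θ)) p₀
          + 2 * pd (0,1) (pdu θ) p₀ ^ 2
          - 2 * pdv θ p₀ * pd (0,1) (pd (1,0) (pdu θ)) p₀
          + 2 * pd (1,0) (pdu θ) p₀ ^ 2) * (pdu θ p₀ ^ 2 + pdv θ p₀ ^ 2)
        - (2 * pdu θ p₀ * pd (0,1) (pdu θ) p₀ - 2 * pdv θ p₀ * pd (1,0) (pdu θ) p₀) ^ 2)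
        / (pdu θ p₀ ^ 2 + pdv θ p₀ ^ 2) ^ 2
      + 2 * (Complex.sinh (θ p₀) / Complex.cosh (θ p₀)) * pd (1,0) (pdu θ) p₀
      - 2 * pdv θ p₀ ^ 2 * (Complex.cosh (θ p₀) ^ 2 - Complex.sinh (θ p₀) ^ 2)
        / Complex.cosh (θ p₀) ^ 2 := by
    rw [pd_congr evv (0,1)]
    rw [pd_sub dDivv dTv (0,1)]
    rw [pd_div dNv (dW p₀ hp₀) (hd p₀ hp₀) (0,1)]
    rw [pd_sub (f := fun y => 2 * pdu θ y * pd (0,1) (pdu θ) y)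
      (g := fun y => 2 * pdv θ y * pd (1,0) (pdu θ) y) ((dA.const_mul 2).mul dQ) ((dB.const_mul 2).mul dP) (0,1)]
    rw [pd_mul (dA.const_mul 2) dQ (0,1), pd_mul (dB.const_mul 2) dP (0,1)]
    rw [pd_const_mul dA 2 (0,1), pd_const_mul dB 2 (0,1)]
    rw [pdW p₀ hp₀ (0,1)]
    rw [pd_mul (dtanh.const_mul 2) dB (0,1), pd_const_mul dtanh 2 (0,1)]
    rw [pd_div (dsinh p₀ hp₀) (dcosh p₀ hp₀) (hc p₀ hp₀) (0,1)]
    rw [pd_sinh (dθ p₀ hp₀) (0,1), pd_cosh (dθ p₀ hp₀) (0,1)]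
    rw [hharmf p₀ hp₀, epv]
    ring
  show pd (1,0) (pd (1,0) L) p₀ + pd (0,1) (pd (0,1) L) p₀ = 2 * α p₀
  rw [Xu, Xv, hα p₀]
  linear_combination
    (2 * pdu θ p₀ * (pdu θ p₀ ^ 2 + pdv θ p₀ ^ 2) / (pdu θ p₀ ^ 2 + pdv θ p₀ ^ 2) ^ 2) * hlapa
    + (2 * pdv θ p₀ * (pdu θ p₀ ^ 2 + pdv θ p₀ ^ 2) / (pdu θ p₀ ^ 2 + pdv θ p₀ ^ 2) ^ 2) * hsymm2
    - (2 * (pdu θ p₀ ^ 2 + pdv θ p₀ ^ 2) / Complex.cosh (θ p₀) ^ 2) * hcs
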